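/- Let I = (x_1,x_2)^2 ∩ (x_2,x_3)^2 ∩ (x_3,x_4,x_5)^2 ∩ (x_5,x_6)^2 in K[x_1,...,x_6]. Then I does not satisfy the non-pure dual exchange property: for u = x_1x_2x_3x_5^2 and v = x_2^2x_4^2x_6^2 in G(I), deg(u) < deg(v) and deg_{x_1}(v) < deg_{x_1}(u), but x_1 x_2^2 x_4^2 x_6^2 / x_i ∉ I for every i ∈ {2, 4, 6}. -/

import Mathlib

open MvPolynomial

/-- Total degree of an exponent vector. -/
def expDeg {n : ℕ} (m : Fin n →₀ ℕ) : ℕ := m.sum fun _ e => e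

/-- A monomial ideal: an ideal generated by a set of monomials. -/
def IsMonomialIdeal {n : ℕ} {K : Type*} [Field K]
    (I : Ideal (MvPolynomial (Fin n) K)) : Prop :=
  ∃ A : Set (Fin n →₀ ℕ), I = Ideal.span ((fun m => (monomial m (1 : K))) '' A)

/-- `m` is (the exponent vector of) a minimal monomial generator of `I`. -/
def MinGen {n : ℕ} {K : Type*} [Field K]
    (I : Ideal (MvPolynomial (Fin n) K)) (m : Fin n →₀ ℕ) : Prop :=
  (monomial m (1 : K)) ∈ I ∧
    ∀ m' : Fin n →₀ ℕ, m' ≤ m → m' ≠ m → (monomial m' (1 : K)) ∉ I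

/-- The non-pure dual exchange property. -/
def NPDE {n : ℕ} {K : Type*} [Field K]
    (I : Ideal (MvPolynomial (Fin n) K)) : Prop :=
  ∀ u v : Fin n →₀ ℕ, MinGen I u → MinGen I v → expDeg u ≤ expDeg v →
    ∀ i : Fin n, v i < u i →
      ∃ j : Fin n, u j < v j ∧
        (monomial (v + Finsupp.single i 1 - Finsupp.single j 1) (1 : K)) ∈ I

/-- `I` has linear quotients. -/
def HasLinearQuotients {n : ℕ} {K : Type*} [Field K]
    (I : Ideal (MvPolynomial (Fin n) K)) : Prop :=
  ∃ l : List (Fin n →₀ ℕ), l.Nodup ∧ (∀ m, MinGen I m ↔ m ∈ l) ∧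
    ∀ k : Fin l.length, 0 < (k : ℕ) →
      ∃ V : Set (Fin n),
        Submodule.colon
          (Ideal.span ((fun m => (monomial m (1 : K))) '' {m | m ∈ l.take k}))
          (Ideal.span {monomial (l.get k) (1 : K)})
        = Ideal.span ((fun i => (X i : MvPolynomial (Fin n) K)) '' V)

/-- The monomial prime ideal generated by the variables with index in `J`. -/
noncomputable def mIdeal {n : ℕ} (K : Type*) [Field K] (J : Set (Fin n)) :
    Ideal (MvPolynomial (Fin n) K) :=
  Ideal.span ((fun i => (X i : MvPolynomial (Fin n) K)) '' J)

/-- `I` is weakly polymatroidal with respect to the variable order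
`x_{σ 0} > x_{σ 1} > ⋯`. -/
def WeaklyPolymatroidal {n : ℕ} {K : Type*} [Field K]
    (I : Ideal (MvPolynomial (Fin n) K)) (σ : Equiv.Perm (Fin n)) : Prop :=
  ∀ u v : Fin n →₀ ℕ, MinGen I u → MinGen I v →
    ∀ t : Fin n, (∀ k : Fin n, k < t → u (σ k) = v (σ k)) → v (σ t) < u (σ t) →
      ∃ j : Fin n, t < j ∧ 0 < v (σ j) ∧
        (monomial (v + Finsupp.single (σ t) 1 - Finsupp.single (σ j) 1) (1 : K)) ∈ I

/-- `I` has a `d`-linear (finite free graded) resolution. -/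
def HasLinearResolution {n : ℕ} {K : Type*} [Field K]
    (I : Ideal (MvPolynomial (Fin n) K)) (d : ℕ) : Prop :=
  ∃ (b : ℕ → ℕ) (g : Fin (b 0) → MvPolynomial (Fin n) K)
    (M : ∀ k : ℕ, Matrix (Fin (b k)) (Fin (b (k + 1))) (MvPolynomial (Fin n) K)),
    (∀ i, (g i).IsHomogeneous d) ∧
    Ideal.span (Set.range g) = I ∧
    (∀ k i j, ((M k) i j).IsHomogeneous 1) ∧
    LinearMap.ker (Fintype.linearCombination (MvPolynomial (Fin n) K) g)
      = LinearMap.range (M 0).mulVecLin ∧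
    ∀ k, LinearMap.ker (M k).mulVecLin = LinearMap.range (M (k + 1)).mulVecLin

/-- The ideal generated by the degree-`d` homogeneous elements of `I`. -/
noncomputable def componentIdeal {n : ℕ} {K : Type*} [Field K]
    (I : Ideal (MvPolynomial (Fin n) K)) (d : ℕ) :
    Ideal (MvPolynomial (Fin n) K) :=
  Ideal.span {f | f ∈ I ∧ f.IsHomogeneous d}

/-- `I` is componentwise linear. -/
def ComponentwiseLinear {n : ℕ} {K : Type*} [Field K]
    (I : Ideal (MvPolynomial (Fin n) K)) : Prop :=
  ∀ d : ℕ, HasLinearResolution (componentIdeal I d) d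

section Helpers
variable {K : Type*} [Field K]

lemma X_mem_mIdeal {i : Fin 6} {J : Set (Fin 6)} (hi : i ∈ J) :
    (X i : MvPolynomial (Fin 6) K) ∈ mIdeal K J :=
  Ideal.subset_span ⟨i, hi, rfl⟩

lemma mem_sq {J : Set (Fin 6)} {i j : Fin 6} (hi : i ∈ J) (hj : j ∈ J)
    {m : Fin 6 →₀ ℕ} (h : Finsupp.single i 1 + Finsupp.single j 1 ≤ m) :
    monomial m (1 : K) ∈ (mIdeal K J) ^ 2 := by
  have key : monomial m (1:K) =
      (X i * X j) * monomial (m - (Finsupp.single i 1 + Finsupp.single j 1)) 1 := by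
    rw [X, X, monomial_mul, monomial_mul, add_tsub_cancel_of_le h, one_mul, one_mul]
  rw [key, sq]
  exact Ideal.mul_mem_right _ _ (Ideal.mul_mem_mul (X_mem_mIdeal hi) (X_mem_mIdeal hj))

lemma two_le_of_mem_sq (J : Finset (Fin 6)) {m : Fin 6 →₀ ℕ}
    (hm : monomial m (1:K) ∈ (mIdeal K (J : Set (Fin 6)))^2) : 2 ≤ ∑ i ∈ J, m i := by
  classical
  set f : Fin 6 → Polynomial K := fun i => if i ∈ J then Polynomial.X else 1 with hf
  have hmap : Ideal.map (aeval f) (mIdeal K (J:Set (Fin 6))) ≤ Ideal.span {Polynomial.X} := by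
    rw [mIdeal, Ideal.map_span]
    apply Ideal.span_le.mpr
    rintro _ ⟨_, ⟨i, hi, rfl⟩, rfl⟩
    rw [aeval_X, hf]
    rw [Finset.mem_coe] at hi
    simp only [hi, if_true]
    exact Ideal.subset_span rfl
  have h2 : aeval f (monomial m (1:K)) ∈ Ideal.span {Polynomial.X ^ 2} := by
    have := Ideal.mem_map_of_mem (aeval f) hm
    rw [Ideal.map_pow] at this
    rw [← Ideal.span_singleton_pow]
    exact Ideal.pow_right_mono hmap 2 this
  have hev : aeval f (monomial m (1:K)) = Polynomial.X ^ (∑ i ∈ J, m i) := by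
    rw [aeval_monomial, map_one, one_mul, Finsupp.prod]
    calc ∏ i ∈ m.support, f i ^ m i
        = ∏ i ∈ m.support, (if i ∈ J then Polynomial.X ^ m i else 1) := by
          refine Finset.prod_congr rfl fun i _ => ?_
          by_cases h : i ∈ J <;> simp [hf, h]
      _ = ∏ i ∈ m.support.filter (· ∈ J), Polynomial.X ^ m i :=
          (Finset.prod_filter _ _).symm
      _ = Polynomial.X ^ (∑ i ∈ m.support.filter (· ∈ J), m i) := by
          rw [Finset.prod_pow_eq_pow_sum]
      _ = Polynomial.X ^ (∑ i ∈ J, m i) := by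
          congr 1
          rw [Finset.filter_mem_eq_inter]
          refine Finset.sum_subset (Finset.inter_subset_right) fun i hi hni => ?_
          rw [Finsupp.notMem_support_iff.mp fun hs => hni (Finset.mem_inter.mpr ⟨hs, hi⟩)]
  rw [hev, Ideal.mem_span_singleton] at h2
  simpa using Polynomial.natDegree_le_of_dvd h2 (pow_ne_zero _ Polynomial.X_ne_zero)

lemma nonmem' (J : Set (Fin 6)) (J' : Finset (Fin 6)) (hJ : (J' : Set (Fin 6)) = J)
    {m : Fin 6 →₀ ℕ} (h : ∑ i ∈ J', m i ≤ 1) : monomial m (1:K) ∉ (mIdeal K J)^2 := by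
  subst hJ
  intro hm
  have := two_le_of_mem_sq J' hm
  omega

end Helpers

noncomputable def uu : Fin 6 →₀ ℕ :=
  Finsupp.single 0 1 + Finsupp.single 1 1 + Finsupp.single 2 1 + Finsupp.single 4 2
noncomputable def vv : Fin 6 →₀ ℕ :=
  Finsupp.single 1 2 + Finsupp.single 3 2 + Finsupp.single 5 2
noncomputable def II (K : Type*) [Field K] : Ideal (MvPolynomial (Fin 6) K) :=
  (mIdeal K {0, 1}) ^ 2 ⊓ (mIdeal K {1, 2}) ^ 2 ⊓ (mIdeal K {2, 3, 4}) ^ 2 ⊓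
    (mIdeal K {4, 5}) ^ 2

section Main
variable (K : Type*) [Field K]

lemma uu_vals : uu 0 = 1 ∧ uu 1 = 1 ∧ uu 2 = 1 ∧ uu 3 = 0 ∧ uu 4 = 2 ∧ uu 5 = 0 := by
  refine ⟨?_,?_,?_,?_,?_,?_⟩ <;> simp [uu, Finsupp.single_apply]

lemma vv_vals : vv 0 = 0 ∧ vv 1 = 2 ∧ vv 2 = 0 ∧ vv 3 = 2 ∧ vv 4 = 0 ∧ vv 5 = 2 := by
  refine ⟨?_,?_,?_,?_,?_,?_⟩ <;> simp [vv, Finsupp.single_apply]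

lemma mem_II_iff {m : Fin 6 →₀ ℕ} (hm : monomial m (1:K) ∈ II K) :
    2 ≤ m 0 + m 1 ∧ 2 ≤ m 1 + m 2 ∧ 2 ≤ m 2 + m 3 + m 4 ∧ 2 ≤ m 4 + m 5 := by
  obtain ⟨⟨⟨h1, h2⟩, h3⟩, h4⟩ := hm
  have g1 := two_le_of_mem_sq ({0,1} : Finset (Fin 6)) (by simpa using h1)
  have g2 := two_le_of_mem_sq ({1,2} : Finset (Fin 6)) (by simpa using h2)
  have g3 := two_le_of_mem_sq ({2,3,4} : Finset (Fin 6)) (by simpa using h3)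
  have g4 := two_le_of_mem_sq ({4,5} : Finset (Fin 6)) (by simpa using h4)
  simp [Finset.sum_insert] at g1 g2 g3 g4
  exact ⟨by omega, by omega, by omega, by omega⟩

lemma uu_mem : monomial uu (1:K) ∈ II K := by
  refine ⟨⟨⟨?_, ?_⟩, ?_⟩, ?_⟩
  · exact mem_sq (i := 0) (j := 1) (by simp) (by simp)
      (Finsupp.le_def.mpr (by intro k; fin_cases k <;> simp [uu, Finsupp.single_apply]))
  · exact mem_sq (i := 1) (j := 2) (by simp) (by simp)
      (Finsupp.le_def.mpr (by intro k; fin_cases k <;> simp [uu, Finsupp.single_apply]))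
  · exact mem_sq (i := 4) (j := 4) (by simp) (by simp)
      (Finsupp.le_def.mpr (by intro k; fin_cases k <;> simp [uu, Finsupp.single_apply]))
  · exact mem_sq (i := 4) (j := 4) (by simp) (by simp)
      (Finsupp.le_def.mpr (by intro k; fin_cases k <;> simp [uu, Finsupp.single_apply]))

lemma vv_mem : monomial vv (1:K) ∈ II K := by
  refine ⟨⟨⟨?_, ?_⟩, ?_⟩, ?_⟩
  · exact mem_sq (i := 1) (j := 1) (by simp) (by simp)
      (Finsupp.le_def.mpr (by intro k; fin_cases k <;> simp [vv, Finsupp.single_apply]))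
  · exact mem_sq (i := 1) (j := 1) (by simp) (by simp)
      (Finsupp.le_def.mpr (by intro k; fin_cases k <;> simp [vv, Finsupp.single_apply]))
  · exact mem_sq (i := 3) (j := 3) (by simp) (by simp)
      (Finsupp.le_def.mpr (by intro k; fin_cases k <;> simp [vv, Finsupp.single_apply]))
  · exact mem_sq (i := 5) (j := 5) (by simp) (by simp)
      (Finsupp.le_def.mpr (by intro k; fin_cases k <;> simp [vv, Finsupp.single_apply]))

lemma uu_minGen : MinGen (II K) uu := by
  refine ⟨uu_mem K, fun m' hle hne hmem => ?_⟩
  have hb := Finsupp.le_def.mp hle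
  have b0 := hb 0; have b1 := hb 1; have b2 := hb 2; have b3 := hb 3
  have b4 := hb 4; have b5 := hb 5
  obtain ⟨e0,e1,e2,e3,e4,e5⟩ := uu_vals
  rw [e0] at b0; rw [e1] at b1; rw [e2] at b2; rw [e3] at b3
  rw [e4] at b4; rw [e5] at b5
  obtain ⟨g1, g2, g3, g4⟩ := mem_II_iff K hmem
  apply hne
  ext i
  fin_cases i <;>
    simp only [show ((⟨0, by omega⟩ : Fin 6) = 0) from rfl, show ((⟨1, by omega⟩ : Fin 6) = 1) from rfl,
      show ((⟨2, by omega⟩ : Fin 6) = 2) from rfl, show ((⟨3, by omega⟩ : Fin 6) = 3) from rfl,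
      show ((⟨4, by omega⟩ : Fin 6) = 4) from rfl, show ((⟨5, by omega⟩ : Fin 6) = 5) from rfl,
      e0, e1, e2, e3, e4, e5] <;> omega

lemma vv_minGen : MinGen (II K) vv := by
  refine ⟨vv_mem K, fun m' hle hne hmem => ?_⟩
  have hb := Finsupp.le_def.mp hle
  have b0 := hb 0; have b1 := hb 1; have b2 := hb 2; have b3 := hb 3
  have b4 := hb 4; have b5 := hb 5
  obtain ⟨e0,e1,e2,e3,e4,e5⟩ := vv_vals
  rw [e0] at b0; rw [e1] at b1; rw [e2] at b2; rw [e3] at b3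
  rw [e4] at b4; rw [e5] at b5
  obtain ⟨g1, g2, g3, g4⟩ := mem_II_iff K hmem
  apply hne
  ext i
  fin_cases i <;>
    simp only [show ((⟨0, by omega⟩ : Fin 6) = 0) from rfl, show ((⟨1, by omega⟩ : Fin 6) = 1) from rfl,
      show ((⟨2, by omega⟩ : Fin 6) = 2) from rfl, show ((⟨3, by omega⟩ : Fin 6) = 3) from rfl,
      show ((⟨4, by omega⟩ : Fin 6) = 4) from rfl, show ((⟨5, by omega⟩ : Fin 6) = 5) from rfl,
      e0, e1, e2, e3, e4, e5] <;> omega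

end Main

section Main2
variable (K : Type*) [Field K]

lemma expDeg_uu : expDeg uu = 5 := by
  rw [expDeg, Finsupp.sum_fintype _ _ (fun _ => rfl), Fin.sum_univ_six]
  obtain ⟨e0,e1,e2,e3,e4,e5⟩ := uu_vals
  rw [e0,e1,e2,e3,e4,e5]

lemma expDeg_vv : expDeg vv = 6 := by
  rw [expDeg, Finsupp.sum_fintype _ _ (fun _ => rfl), Fin.sum_univ_six]
  obtain ⟨e0,e1,e2,e3,e4,e5⟩ := vv_vals
  rw [e0,e1,e2,e3,e4,e5]

lemma not_NPDE : ¬ NPDE (II K) := by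
  intro h
  obtain ⟨j, hj1, hj2⟩ := h uu vv (uu_minGen K) (vv_minGen K)
    (by rw [expDeg_uu, expDeg_vv]; omega) 0
    (by rw [uu_vals.1, vv_vals.1]; omega)
  obtain ⟨g1,g2,g3,g4⟩ := mem_II_iff K hj2
  have hj6 : j = 0 ∨ j = 1 ∨ j = 2 ∨ j = 3 ∨ j = 4 ∨ j = 5 := by fin_cases j <;> decide
  rcases hj6 with rfl | rfl | rfl | rfl | rfl | rfl <;>
    first
      | (simp [Finsupp.tsub_apply, Finsupp.add_apply, vv, Finsupp.single_apply] at g1 g2 g3 g4 <;> omega)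
      | (simp [uu, vv, Finsupp.single_apply] at hj1)

end Main2

section Main3
variable (K : Type*) [Field K]

lemma nonmem1 : (X 0 * X 1 * X 3 ^ 2 * X 5 ^ 2 : MvPolynomial (Fin 6) K) ∉ II K := by
  have key : (X 0 * X 1 * X 3 ^ 2 * X 5 ^ 2 : MvPolynomial (Fin 6) K) =
      monomial (Finsupp.single 0 1 + Finsupp.single 1 1 + Finsupp.single 3 2 +
        Finsupp.single 5 2) 1 := by
    rw [X_pow_eq_monomial, X_pow_eq_monomial, X, X, monomial_mul, monomial_mul, monomial_mul,
      one_mul, one_mul, one_mul]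
  rw [key]
  intro hm
  obtain ⟨g1,g2,g3,g4⟩ := mem_II_iff K hm
  simp [Finsupp.add_apply, Finsupp.single_apply] at g2

lemma nonmem2 : (X 0 * X 1 ^ 2 * X 3 * X 5 ^ 2 : MvPolynomial (Fin 6) K) ∉ II K := by
  have key : (X 0 * X 1 ^ 2 * X 3 * X 5 ^ 2 : MvPolynomial (Fin 6) K) =
      monomial (Finsupp.single 0 1 + Finsupp.single 1 2 + Finsupp.single 3 1 +
        Finsupp.single 5 2) 1 := by
    rw [X_pow_eq_monomial, X_pow_eq_monomial, X, X, monomial_mul, monomial_mul, monomial_mul,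
      one_mul, one_mul, one_mul]
  rw [key]
  intro hm
  obtain ⟨g1,g2,g3,g4⟩ := mem_II_iff K hm
  simp [Finsupp.add_apply, Finsupp.single_apply] at g3

lemma nonmem3 : (X 0 * X 1 ^ 2 * X 3 ^ 2 * X 5 : MvPolynomial (Fin 6) K) ∉ II K := by
  have key : (X 0 * X 1 ^ 2 * X 3 ^ 2 * X 5 : MvPolynomial (Fin 6) K) =
      monomial (Finsupp.single 0 1 + Finsupp.single 1 2 + Finsupp.single 3 2 +
        Finsupp.single 5 1) 1 := by
    rw [X_pow_eq_monomial, X_pow_eq_monomial, X, X, monomial_mul, monomial_mul, monomial_mul,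
      one_mul, one_mul, one_mul]
  rw [key]
  intro hm
  obtain ⟨g1,g2,g3,g4⟩ := mem_II_iff K hm
  simp [Finsupp.add_apply, Finsupp.single_apply] at g4

end Main3

theorem stmt11 (K : Type*) [Field K] :
    let I : Ideal (MvPolynomial (Fin 6) K) :=
      (mIdeal K {0, 1}) ^ 2 ⊓ (mIdeal K {1, 2}) ^ 2 ⊓ (mIdeal K {2, 3, 4}) ^ 2 ⊓
        (mIdeal K {4, 5}) ^ 2
    let u : Fin 6 →₀ ℕ :=
      Finsupp.single 0 1 + Finsupp.single 1 1 + Finsupp.single 2 1 + Finsupp.single 4 2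
    let v : Fin 6 →₀ ℕ := Finsupp.single 1 2 + Finsupp.single 3 2 + Finsupp.single 5 2
    ¬ NPDE I ∧ MinGen I u ∧ MinGen I v ∧ expDeg u < expDeg v ∧ v 0 < u 0 ∧
    (X 0 * X 1 * X 3 ^ 2 * X 5 ^ 2 : MvPolynomial (Fin 6) K) ∉ I ∧
    (X 0 * X 1 ^ 2 * X 3 * X 5 ^ 2 : MvPolynomial (Fin 6) K) ∉ I ∧
    (X 0 * X 1 ^ 2 * X 3 ^ 2 * X 5 : MvPolynomial (Fin 6) K) ∉ I := by
  intro I u v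
  exact ⟨not_NPDE K, uu_minGen K, vv_minGen K,
    by rw [show expDeg u = expDeg uu from rfl, show expDeg v = expDeg vv from rfl,
      expDeg_uu, expDeg_vv]; omega,
    by rw [show v 0 = vv 0 from rfl, show u 0 = uu 0 from rfl, vv_vals.1, uu_vals.1]; omega,
    nonmem1 K, nonmem2 K, nonmem3 K⟩
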